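/- arXiv:0709.1013 — 3 statements merged into one kernel-verified Lean document; each statement's English description precedes it below -/
import Mathlib

section
/- Let (Ω, ℱ, ℙ) be a probability space and let X and Y be real-valued random variables on Ω. Assume: (i) the law of X is absolutely continuous with respect to Lebesgue measure with density f, and f is continuous on a neighbourhood of a point x ∈ ℝ; (ii) sup_ω |Y(ω)| < ∞; (iii) there is a Markov kernel K from ℝ to ℝ that is a version of the conditional distribution of Y given X, such that s ↦ K(s, ·) is weakly continuous at x. Then for all families (x_t), (a_t), (c_t) of real numbers with x_t → x, a_t → a, c_t → c and c_t ≥ 0 as t ↓ 0, one has (1/t) · ℙ( x_t < X + t·a_t·Y ≤ x_t + t·c_t ) → c · f(x) as t ↓ 0. -/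
open MeasureTheory ProbabilityTheory Filter Topology Set
open scoped ENNReal


noncomputable def vvwBump (p q δ : ℝ) (u : ℝ) : ℝ :=
  max 0 (min 1 ((u - (p - δ)) / δ)) * max 0 (min 1 (((q + δ) - u) / δ))

lemma vvwBump_nonneg (p q δ u : ℝ) : 0 ≤ vvwBump p q δ u :=
  mul_nonneg (le_max_left _ _) (le_max_left _ _)

lemma vvwBump_le_one (p q δ u : ℝ) : vvwBump p q δ u ≤ 1 := by
  have h1 : max 0 (min 1 ((u - (p - δ)) / δ)) ≤ 1 :=
    max_le zero_le_one (min_le_left _ _)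
  have h2 : max 0 (min 1 (((q + δ) - u) / δ)) ≤ 1 :=
    max_le zero_le_one (min_le_left _ _)
  calc vvwBump p q δ u ≤ 1 * 1 :=
        mul_le_mul h1 h2 (le_max_left _ _) zero_le_one
    _ = 1 := by ring

lemma vvwBump_continuous (p q δ : ℝ) : Continuous (vvwBump p q δ) := by
  unfold vvwBump; fun_prop

lemma vvwBump_eq_one {p q δ u : ℝ} (hδ : 0 < δ) (h : u ∈ Icc p q) :
    vvwBump p q δ u = 1 := by
  obtain ⟨h1, h2⟩ := h
  have e1 : (1 : ℝ) ≤ (u - (p - δ)) / δ := by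
    rw [le_div_iff₀ hδ]; linarith
  have e2 : (1 : ℝ) ≤ ((q + δ) - u) / δ := by
    rw [le_div_iff₀ hδ]; linarith
  unfold vvwBump
  rw [min_eq_left e1, min_eq_left e2]
  simp

lemma vvwBump_eq_zero {p q δ u : ℝ} (hδ : 0 < δ) (h : u ∉ Ioo (p - δ) (q + δ)) :
    vvwBump p q δ u = 0 := by
  rw [mem_Ioo, not_and_or, not_lt, not_lt] at h
  unfold vvwBump
  rcases h with h | h
  · have : (u - (p - δ)) / δ ≤ 0 := div_nonpos_of_nonpos_of_nonneg (by linarith) hδ.le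
    have : min 1 ((u - (p - δ)) / δ) ≤ 0 := le_trans (min_le_right _ _) this
    rw [max_eq_left this, zero_mul]
  · have : ((q + δ) - u) / δ ≤ 0 := div_nonpos_of_nonpos_of_nonneg (by linarith) hδ.le
    have : min 1 (((q + δ) - u) / δ) ≤ 0 := le_trans (min_le_right _ _) this
    rw [max_eq_left this, mul_zero]

lemma vvwBump_pos_mem {p q δ u : ℝ} (hδ : 0 < δ) (h : vvwBump p q δ u ≠ 0) :
    u ∈ Ioo (p - δ) (q + δ) := by
  by_contra hc; exact h (vvwBump_eq_zero hδ hc)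

lemma vvwBump_integrable {p q δ : ℝ} (hδ : 0 < δ) :
    Integrable (vvwBump p q δ) := by
  have hsupp : HasCompactSupport (vvwBump p q δ) := by
    apply HasCompactSupport.intro (isCompact_Icc (a := p - δ) (b := q + δ))
    intro u hu
    exact vvwBump_eq_zero hδ (fun hmem => hu ⟨hmem.1.le, hmem.2.le⟩)
  exact (vvwBump_continuous p q δ).integrable_of_hasCompactSupport hsupp

lemma vvwBump_integral_le {p q δ : ℝ} (hδ : 0 < δ) (hpq : p ≤ q) :
    ∫ u, vvwBump p q δ u ≤ q - p + 2 * δ := by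
  have hle : ∀ u, vvwBump p q δ u ≤ (Icc (p - δ) (q + δ)).indicator (fun _ => (1:ℝ)) u := by
    intro u
    by_cases hu : u ∈ Icc (p - δ) (q + δ)
    · rw [indicator_of_mem hu]; exact vvwBump_le_one p q δ u
    · rw [indicator_of_notMem hu]
      have : u ∉ Ioo (p - δ) (q + δ) := fun h => hu ⟨h.1.le, h.2.le⟩
      rw [vvwBump_eq_zero hδ this]
  have hind : Integrable ((Icc (p - δ) (q + δ)).indicator (fun _ => (1:ℝ))) := by
    rw [integrable_indicator_iff measurableSet_Icc]
    exact integrableOn_const (by rw [Real.volume_Icc]; exact ENNReal.ofReal_ne_top)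
  calc ∫ u, vvwBump p q δ u
      ≤ ∫ u, (Icc (p - δ) (q + δ)).indicator (fun _ => (1:ℝ)) u :=
        integral_mono (vvwBump_integrable hδ) hind hle
    _ = (volume (Icc (p - δ) (q + δ))).toReal := by
        rw [integral_indicator measurableSet_Icc]; simp [ENNReal.toReal_ofReal']
    _ = q - p + 2 * δ := by
        rw [Real.volume_Icc, ENNReal.toReal_ofReal (by linarith)]; ring

lemma vvwBump_le_integral {p q δ : ℝ} (hδ : 0 < δ) (hpq : p ≤ q) :
    q - p ≤ ∫ u, vvwBump p q δ u := by
  have hle : ∀ u, (Icc p q).indicator (fun _ => (1:ℝ)) u ≤ vvwBump p q δ u := by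
    intro u
    by_cases hu : u ∈ Icc p q
    · rw [indicator_of_mem hu, vvwBump_eq_one hδ hu]
    · rw [indicator_of_notMem hu]; exact vvwBump_nonneg p q δ u
  have hind : Integrable ((Icc p q).indicator (fun _ => (1:ℝ))) := by
    rw [integrable_indicator_iff measurableSet_Icc]
    exact integrableOn_const (by rw [Real.volume_Icc]; exact ENNReal.ofReal_ne_top)
  calc q - p = (volume (Icc p q)).toReal := by
        rw [Real.volume_Icc, ENNReal.toReal_ofReal (by linarith)]
    _ = ∫ u, (Icc p q).indicator (fun _ => (1:ℝ)) u := by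
        rw [integral_indicator measurableSet_Icc]; simp [ENNReal.toReal_ofReal']
    _ ≤ ∫ u, vvwBump p q δ u := integral_mono hind (vvwBump_integrable hδ) hle

lemma vvwSwap (ρ : Measure ℝ) [IsProbabilityMeasure ρ] (a : ℝ) {p q δ : ℝ} (hδ : 0 < δ) :
    ∫ v, (∫ y, vvwBump p q δ (v + a * y) ∂ρ) = ∫ u, vvwBump p q δ u := by
  set g := vvwBump p q δ with hg
  have hg0 : ∀ u, 0 ≤ g u := vvwBump_nonneg p q δ
  have hg1 : ∀ u, g u ≤ 1 := vvwBump_le_one p q δ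
  have hgc : Continuous g := vvwBump_continuous p q δ
  set G : ℝ≥0∞ := ∫⁻ u, ENNReal.ofReal (g u) with hG
  have hGtop : G ≠ ⊤ := by
    have := (vvwBump_integrable hδ (p := p) (q := q)).hasFiniteIntegral
    rw [hasFiniteIntegral_iff_ofReal (ae_of_all _ hg0)] at this
    exact this.ne
  have hgint : ∫ u, g u = G.toReal :=
    integral_eq_lintegral_of_nonneg_ae (ae_of_all _ hg0) hgc.aestronglyMeasurable
  have hinner : ∀ v, ∫ y, g (v + a * y) ∂ρ
      = (∫⁻ y, ENNReal.ofReal (g (v + a * y)) ∂ρ).toReal := by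
    intro v
    exact integral_eq_lintegral_of_nonneg_ae (ae_of_all _ fun y => hg0 _)
      ((hgc.comp (continuous_const.add (continuous_const.mul continuous_id))).aestronglyMeasurable)
  have huncur : Measurable (fun z : ℝ × ℝ => ENNReal.ofReal (g (z.1 + a * z.2))) := by
    apply ENNReal.measurable_ofReal.comp
    exact (hgc.comp (continuous_fst.add (continuous_const.mul continuous_snd))).measurable
  have hinner_le : ∀ v, (∫⁻ y, ENNReal.ofReal (g (v + a * y)) ∂ρ) ≤ 1 := by
    intro v
    calc ∫⁻ y, ENNReal.ofReal (g (v + a * y)) ∂ρ ≤ ∫⁻ _, 1 ∂ρ :=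
          lintegral_mono fun y => ENNReal.ofReal_le_one.2 (hg1 _)
      _ = 1 := by simp
  have houter : ∫ v, (∫ y, g (v + a * y) ∂ρ)
      = (∫⁻ v, ∫⁻ y, ENNReal.ofReal (g (v + a * y)) ∂ρ).toReal := by
    rw [show (fun v => ∫ y, g (v + a * y) ∂ρ)
        = fun v => (∫⁻ y, ENNReal.ofReal (g (v + a * y)) ∂ρ).toReal from funext hinner]
    rw [integral_eq_lintegral_of_nonneg_ae (ae_of_all _ fun v => ENNReal.toReal_nonneg)]
    · congr 1
      apply lintegral_congr
      intro v
      exact ENNReal.ofReal_toReal (lt_of_le_of_lt (hinner_le v) ENNReal.one_lt_top).ne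
    · apply Measurable.aestronglyMeasurable
      exact (Measurable.lintegral_prod_right (f := fun v y => ENNReal.ofReal (g (v + a * y)))
        huncur).ennreal_toReal
  rw [houter, hgint]
  congr 1
  rw [lintegral_lintegral_swap huncur.aemeasurable]
  have : ∀ y : ℝ, (∫⁻ v, ENNReal.ofReal (g (v + a * y))) = G := by
    intro y
    exact lintegral_add_right_eq_self (fun u => ENNReal.ofReal (g u)) (a * y)
  rw [lintegral_congr this]
  simp

lemma vvwMapAffine {b t : ℝ} (ht : t ≠ 0) :
    Measure.map (fun v : ℝ => b + t * v) volume = ENNReal.ofReal |t⁻¹| • volume := by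
  have : (fun v : ℝ => b + t * v) = (fun u : ℝ => b + u) ∘ (fun v : ℝ => t * v) := rfl
  rw [this, ← Measure.map_map (measurable_const_add b) (measurable_const_mul t)]
  rw [Real.map_volume_mul_left ht, Measure.map_smul]
  congr 1
  exact map_add_left_eq_self volume b

lemma vvwQMP {b t : ℝ} (ht : t ≠ 0) :
    Measure.QuasiMeasurePreserving (fun v : ℝ => b + t * v) volume volume := by
  refine ⟨(measurable_const_mul t).const_add b, ?_⟩
  rw [vvwMapAffine ht]
  exact Measure.smul_absolutelyContinuous

lemma vvwIntegrableAffine {F : ℝ → ℝ} (hF : Integrable F (volume : Measure ℝ)) (b : ℝ) {t : ℝ}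
    (ht : t ≠ 0) : Integrable (fun v => F (b + t * v)) (volume : Measure ℝ) := by
  have hmap := vvwMapAffine (b := b) ht
  have haem : AEMeasurable F (volume : Measure ℝ) := hF.aemeasurable
  have : Integrable F (Measure.map (fun v : ℝ => b + t * v) volume) := by
    rw [hmap]
    refine (integrable_smul_measure ?_ ?_).2 hF
    · simp [ENNReal.ofReal_eq_zero, not_le, abs_pos, inv_ne_zero ht, ht]
    · exact ENNReal.ofReal_ne_top
  have := (integrable_map_measure this.aestronglyMeasurable
      ((measurable_const_mul t).const_add b).aemeasurable).mp this
  exact this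

lemma vvwQMP_ae {e : ℝ → ℝ} (hqmp : Measure.QuasiMeasurePreserving e volume volume)
    {p : ℝ → Prop} (h : ∀ᵐ s, p s) : ∀ᵐ v, p (e v) := by
  rw [ae_iff] at h ⊢
  exact hqmp.preimage_null h

set_option maxHeartbeats 2000000 in
/-- Lemma 3.2 of van der Vaart & Wellner applied with `g = 1`:
`t⁻¹ ℙ(x_t < X + t a_t Y ≤ x_t + t c_t) → c f(x)`. -/
theorem stmt_2
    {Ω : Type*} [MeasurableSpace Ω] (P : Measure Ω) [IsProbabilityMeasure P]
    (X Y : Ω → ℝ)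
    (hX : Measurable X) (hY : Measurable Y)
    (f : ℝ → ℝ) (x : ℝ)
    -- (i) the law of X has Lebesgue density f, continuous near x
    (hdens : Measure.map X P = volume.withDensity fun s => ENNReal.ofReal (f s))
    (hfcont : ∃ U ∈ 𝓝 x, ContinuousOn f U)
    -- (ii) ‖Y‖_∞ < ∞
    (hYbd : ∃ C, ∀ ω, |Y ω| ≤ C)
    -- (iii) K is a version of the conditional distribution of Y given X,
    -- weakly continuous at x
    (K : Kernel ℝ ℝ) [IsMarkovKernel K]
    (hKcond : ∀ A B : Set ℝ, MeasurableSet A → MeasurableSet B →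
      (P {ω | X ω ∈ A ∧ Y ω ∈ B}).toReal = ∫ s in A, (K s B).toReal * f s)
    (hKweak : ∀ g : ℝ → ℝ, Continuous g → (∃ C, ∀ y, |g y| ≤ C) →
      Tendsto (fun s => ∫ y, g y ∂(K s)) (𝓝 x) (𝓝 (∫ y, g y ∂(K x))))
    -- the data of the conclusion
    (xt af cf : ℝ → ℝ) (a c : ℝ)
    (hxt : Tendsto xt (𝓝[>] (0 : ℝ)) (𝓝 x))
    (haf : Tendsto af (𝓝[>] (0 : ℝ)) (𝓝 a))
    (hcf : Tendsto cf (𝓝[>] (0 : ℝ)) (𝓝 c))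
    (hcf0 : ∀ᶠ t in 𝓝[>] (0 : ℝ), 0 ≤ cf t) :
    Tendsto
      (fun t => (1 / t) *
        (P {ω | xt t < X ω + t * af t * Y ω ∧
            X ω + t * af t * Y ω ≤ xt t + t * cf t}).toReal)
      (𝓝[>] (0 : ℝ)) (𝓝 (c * f x)) := by
  classical
  obtain ⟨C₀, hC₀⟩ := hYbd
  set C : ℝ := max C₀ 0 with hCdef
  have hC0 : (0:ℝ) ≤ C := le_max_right _ _
  have hC : ∀ ω, Y ω ∈ Icc (-C) C := by
    intro ω
    have h := abs_le.mp (hC₀ ω)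
    have h1 : C₀ ≤ C := le_max_left _ _
    exact ⟨by linarith [h.1], by linarith [h.2]⟩
  obtain ⟨U, hU, hfU⟩ := hfcont
  set l := 𝓝[>] (0:ℝ) with hl
  set ν := Measure.map X P with hν
  haveI hνprob : IsProbabilityMeasure ν := Measure.isProbabilityMeasure_map hX.aemeasurable
  -- basic integrability of f
  have hint : Integrable f volume := by
    by_contra hcon
    have h1 := hKcond univ univ MeasurableSet.univ MeasurableSet.univ
    simp only [mem_univ, and_self, setOf_true, measure_univ, ENNReal.toReal_one,
      Measure.restrict_univ, one_mul] at h1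
    rw [integral_undef hcon] at h1
    norm_num at h1
  have hf0ae : 0 ≤ᵐ[volume] f := by
    refine ae_nonneg_of_forall_setIntegral_nonneg hint fun A hA _ => ?_
    have h1 := hKcond A univ hA MeasurableSet.univ
    simp only [mem_univ, and_true, measure_univ, ENNReal.toReal_one, one_mul] at h1
    rw [← h1]
    exact ENNReal.toReal_nonneg
  have haef : AEMeasurable f (volume : Measure ℝ) := hint.aemeasurable
  set f₀ : ℝ → ℝ := haef.mk f with hf₀def
  have hf₀meas : Measurable f₀ := haef.measurable_mk
  have hff₀ : f =ᵐ[volume] f₀ := haef.ae_eq_mk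
  set G₀ : ℝ → ℝ := fun s => max (f₀ s) 0 with hG₀def
  have hG₀meas : Measurable G₀ := hf₀meas.max measurable_const
  have hG₀0 : ∀ s, 0 ≤ G₀ s := fun s => le_max_right _ _
  have hfG₀ : f =ᵐ[volume] G₀ := by
    filter_upwards [hff₀, hf0ae] with s h1 h2
    have h2' : (0:ℝ) ≤ f s := h2
    rw [hG₀def]
    simp only [← h1, max_eq_left h2']
  set U' : Set ℝ := interior U with hU'def
  have hU'open : IsOpen U' := isOpen_interior
  have hxU' : x ∈ U' := mem_interior_iff_mem_nhds.2 hU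
  set F : ℝ → ℝ := fun s => if s ∈ U' then max (f s) 0 else G₀ s with hFdef
  have hFG₀ : F =ᵐ[volume] G₀ := by
    filter_upwards [hff₀] with s h1
    rw [hFdef, hG₀def]
    by_cases hs : s ∈ U' <;> simp [hs, h1]
  have hFaem : AEMeasurable F (volume : Measure ℝ) := hG₀meas.aemeasurable.congr hFG₀.symm
  have hF0 : ∀ s, 0 ≤ F s := by
    intro s; rw [hFdef]
    by_cases hs : s ∈ U' <;> simp [hs, hG₀0 s, le_max_right]
  have hFf : F =ᵐ[volume] f := hFG₀.trans hfG₀.symm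
  have hFint : Integrable F volume := hint.congr hFf.symm
  have hcont_at : ContinuousAt f x := hfU.continuousAt hU
  have hfx0 : 0 ≤ f x := by
    by_contra hneg
    push_neg at hneg
    have hev : ∀ᶠ s in 𝓝 x, f s < 0 := hcont_at.eventually_lt continuousAt_const hneg
    obtain ⟨V, hVsub, hVopen, hxV⟩ := eventually_nhds_iff.mp hev
    have h0 : volume {s : ℝ | ¬ (0:ℝ) ≤ f s} = 0 := by
      have h := hf0ae
      rw [EventuallyLE, ae_iff] at h
      simpa using h
    have hV0 : volume V = 0 := by
      refine measure_mono_null (fun s hs => ?_) h0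
      simp only [mem_setOf_eq, not_le]
      exact hVsub s hs
    exact absurd hV0 (hVopen.measure_ne_zero volume ⟨x, hxV⟩)
  have hνF : ν = volume.withDensity (fun s => ENNReal.ofReal (G₀ s)) := by
    rw [hdens]
    refine withDensity_congr_ae ?_
    filter_upwards [hfG₀] with s hs
    rw [hs]
  -- rectangle identity
  have hrect : ∀ A B : Set ℝ, MeasurableSet A → MeasurableSet B →
      P {ω | X ω ∈ A ∧ Y ω ∈ B} = ∫⁻ s in A, K s B ∂ν := by
    intro A B hA hB
    have hKm : Measurable fun s => K s B := K.measurable_coe hB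
    have hR : ∫⁻ s in A, K s B ∂ν = ∫⁻ s in A, K s B * ENNReal.ofReal (G₀ s) ∂volume := by
      rw [hνF, restrict_withDensity hA,
        lintegral_withDensity_eq_lintegral_mul₀ (hG₀meas.ennreal_ofReal).aemeasurable
          hKm.aemeasurable]
      exact lintegral_congr fun s => mul_comm _ _
    set Λ := ∫⁻ s in A, K s B * ENNReal.ofReal (G₀ s) ∂volume with hΛ
    have hΛle : Λ ≤ 1 := by
      calc Λ ≤ ∫⁻ s in A, 1 * ENNReal.ofReal (G₀ s) ∂volume :=
            lintegral_mono fun s => mul_le_mul_left prob_le_one _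
        _ = ∫⁻ s in A, ENNReal.ofReal (G₀ s) ∂volume := by simp
        _ = ν A := by rw [hνF, withDensity_apply _ hA]
        _ ≤ 1 := prob_le_one
    have hreal : Λ.toReal = ∫ s in A, (K s B).toReal * G₀ s ∂volume := by
      rw [integral_eq_lintegral_of_nonneg_ae
        (ae_of_all _ fun s => mul_nonneg ENNReal.toReal_nonneg (hG₀0 s))
        ((hKm.ennreal_toReal.mul hG₀meas).aestronglyMeasurable.restrict)]
      congr 1
      refine lintegral_congr fun s => ?_
      rw [ENNReal.ofReal_mul ENNReal.toReal_nonneg, ENNReal.ofReal_toReal (measure_ne_top _ _)]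
    have hKreal := hKcond A B hA hB
    have hswap : ∫ s in A, (K s B).toReal * f s ∂volume
        = ∫ s in A, (K s B).toReal * G₀ s ∂volume := by
      refine integral_congr_ae ?_
      filter_upwards [ae_restrict_of_ae hfG₀] with s hs
      rw [hs]
    have hPtoReal : (P {ω | X ω ∈ A ∧ Y ω ∈ B}).toReal = Λ.toReal := by
      rw [hKreal, hswap, hreal]
    rw [hR]
    exact (ENNReal.toReal_eq_toReal_iff' (measure_ne_top P _) (hΛle.trans_lt ENNReal.one_lt_top).ne).mp
      hPtoReal
  -- joint law
  have hpair : Measurable fun ω => (X ω, Y ω) := hX.prodMk hY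
  haveI : IsProbabilityMeasure (Measure.map (fun ω => (X ω, Y ω)) P) :=
    Measure.isProbabilityMeasure_map hpair.aemeasurable
  have hjoint : Measure.map (fun ω => (X ω, Y ω)) P = ν.compProd K := by
    refine ext_of_generate_finite _ generateFrom_prod.symm isPiSystem_prod ?_ ?_
    · rintro s ⟨A, hA, B, hB, rfl⟩
      have hA' : MeasurableSet A := hA
      have hB' : MeasurableSet B := hB
      rw [Measure.map_apply hpair (hA'.prod hB'),
        Measure.compProd_apply_prod hA' hB', ← hrect A B hA' hB']
      rfl
    · simp
  -- kernel supported in Icc (-C) C at density points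
  have hsupp : ∀ᵐ s ∂(volume : Measure ℝ), G₀ s ≠ 0 → K s (Icc (-C) C)ᶜ = 0 := by
    have hBm : MeasurableSet (Icc (-C) C)ᶜ := measurableSet_Icc.compl
    have h0 : P {ω | X ω ∈ (univ : Set ℝ) ∧ Y ω ∈ (Icc (-C) C)ᶜ} = 0 := by
      convert measure_empty
      · ext ω
        simp only [mem_univ, true_and, mem_setOf_eq, mem_compl_iff, mem_empty_iff_false,
          iff_false, not_not]
        exact hC ω
      · infer_instance
    have h1 := hrect univ (Icc (-C) C)ᶜ MeasurableSet.univ hBm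
    rw [h0, Measure.restrict_univ] at h1
    have h2 : ∀ᵐ s ∂ν, K s (Icc (-C) C)ᶜ = 0 := by
      have h3 := (lintegral_eq_zero_iff (K.measurable_coe hBm)).mp h1.symm
      filter_upwards [h3] with s hs
      exact hs
    rw [hνF, ae_withDensity_iff hG₀meas.ennreal_ofReal] at h2
    filter_upwards [h2] with s hs hs0
    refine hs ?_
    simp only [ne_eq, ENNReal.ofReal_eq_zero, not_le]
    exact lt_of_le_of_ne (hG₀0 s) (Ne.symm hs0)
  -- reduction to the rescaled integral J
  set J : ℝ → ℝ := fun t => ∫ v, (K (xt t + t * v)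
      {y | 0 < v + af t * y ∧ v + af t * y ≤ cf t}).toReal * F (xt t + t * v) ∂volume with hJdef
  have hident : ∀ᶠ t in l, (1 / t) * (P {ω | xt t < X ω + t * af t * Y ω ∧
      X ω + t * af t * Y ω ≤ xt t + t * cf t}).toReal = J t := by
    filter_upwards [self_mem_nhdsWithin] with t ht'
    have ht : (0:ℝ) < t := ht'
    set Et : Set (ℝ × ℝ) := {p | xt t < p.1 + t * af t * p.2 ∧
      p.1 + t * af t * p.2 ≤ xt t + t * cf t} with hEt
    have hEtm : MeasurableSet Et := by
      have hEq : Et = (fun p : ℝ × ℝ => p.1 + t * af t * p.2) ⁻¹'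
          (Ioc (xt t) (xt t + t * cf t)) := rfl
      rw [hEq]
      exact (measurable_fst.add (measurable_snd.const_mul (t * af t))) measurableSet_Ioc
    have hsec2 : ∫⁻ s, K s (Prod.mk s ⁻¹' Et) ∂ν
        = ∫⁻ s, K s (Prod.mk s ⁻¹' Et) * ENNReal.ofReal (G₀ s) ∂volume := by
      rw [hνF, lintegral_withDensity_eq_lintegral_mul₀ (hG₀meas.ennreal_ofReal).aemeasurable
        (Kernel.measurable_kernel_prodMk_left hEtm).aemeasurable]
      exact lintegral_congr fun s => mul_comm _ _
    set Λ := ∫⁻ s, K s (Prod.mk s ⁻¹' Et) * ENNReal.ofReal (G₀ s) ∂volume with hΛ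
    have hPΛ : P {ω | xt t < X ω + t * af t * Y ω ∧
        X ω + t * af t * Y ω ≤ xt t + t * cf t} = Λ := by
      rw [← hsec2, ← Measure.compProd_apply hEtm, ← hjoint, Measure.map_apply hpair hEtm]
      rfl
    have hΛle : Λ ≤ 1 := by
      calc Λ ≤ ∫⁻ s, 1 * ENNReal.ofReal (G₀ s) ∂volume :=
            lintegral_mono fun s => mul_le_mul_left prob_le_one _
        _ = ∫⁻ s, ENNReal.ofReal (G₀ s) ∂volume := by simp
        _ = ν univ := by rw [hνF, withDensity_apply _ MeasurableSet.univ, Measure.restrict_univ]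
        _ ≤ 1 := prob_le_one
    set g1 : ℝ → ℝ := fun s => (K s (Prod.mk s ⁻¹' Et)).toReal * G₀ s with hg1
    have hreal : Λ.toReal = ∫ s, g1 s ∂volume := by
      rw [hg1, integral_eq_lintegral_of_nonneg_ae
        (ae_of_all _ fun s => mul_nonneg ENNReal.toReal_nonneg (hG₀0 s))
        (((Kernel.measurable_kernel_prodMk_left hEtm).ennreal_toReal.mul
          hG₀meas).aestronglyMeasurable)]
      congr 1
      refine lintegral_congr fun s => ?_
      rw [ENNReal.ofReal_mul ENNReal.toReal_nonneg, ENNReal.ofReal_toReal (measure_ne_top _ _)]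
    have hcv : ∫ v, g1 (t * v + xt t) ∂volume = |t⁻¹| • ∫ s, g1 s ∂volume := by
      rw [show (fun v => g1 (t * v + xt t)) = (fun v => (fun u => g1 (u + xt t)) (t * v))
        from rfl]
      rw [Measure.integral_comp_mul_left (fun u => g1 (u + xt t)) t]
      congr 1
      exact integral_add_right_eq_self g1 (xt t)
    have hST : ∀ v : ℝ, Prod.mk (xt t + t * v) ⁻¹' Et
        = {y | 0 < v + af t * y ∧ v + af t * y ≤ cf t} := by
      intro v
      ext y
      simp only [mem_preimage, hEt, mem_setOf_eq]
      constructor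
      · rintro ⟨h1, h2⟩
        exact ⟨by nlinarith, by nlinarith⟩
      · rintro ⟨h1, h2⟩
        exact ⟨by nlinarith, by nlinarith⟩
    have hFGv : ∀ᵐ v ∂(volume : Measure ℝ), F (xt t + t * v) = G₀ (xt t + t * v) :=
      vvwQMP_ae (vvwQMP ht.ne') hFG₀
    have hJt : J t = ∫ v, g1 (t * v + xt t) ∂volume := by
      rw [hJdef]
      refine integral_congr_ae ?_
      filter_upwards [hFGv] with v hv
      rw [hg1]
      simp only []
      rw [show t * v + xt t = xt t + t * v from add_comm _ _, hST v, hv]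
    rw [hPΛ, hJt, hcv, smul_eq_mul, abs_inv, abs_of_pos ht, hreal, one_div]
  -- main limit
  have hc0 : 0 ≤ c := ge_of_tendsto hcf hcf0
  obtain ⟨δ₀, hδ₀pos, hδ₀sub⟩ : ∃ δ₀ > 0, Icc (x - δ₀) (x + δ₀) ⊆ U' := by
    obtain ⟨r, hrpos, hr⟩ := Metric.mem_nhds_iff.mp (hU'open.mem_nhds hxU')
    refine ⟨r/2, by positivity, fun s hs => hr ?_⟩
    rw [mem_Icc] at hs
    obtain ⟨hs1, hs2⟩ := hs
    rw [Metric.mem_ball, Real.dist_eq]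
    refine lt_of_le_of_lt (show |s - x| ≤ r/2 from abs_le.mpr ⟨by linarith, by linarith⟩)
      (by linarith)
  obtain ⟨B₀, hB₀⟩ := (isCompact_Icc (a := x - δ₀) (b := x + δ₀)).exists_bound_of_continuousOn
    (hfU.mono (fun s hs => interior_subset (hδ₀sub hs)))
  set B : ℝ := max B₀ 0 with hBdef
  have hB0 : 0 ≤ B := le_max_right _ _
  have hFB : ∀ s ∈ Icc (x - δ₀) (x + δ₀), F s ≤ B := by
    intro s hs
    have hsU' : s ∈ U' := hδ₀sub hs
    have hFs : F s = max (f s) 0 := by rw [hFdef]; simp [hsU']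
    rw [hFs, hBdef]
    exact max_le_max (le_trans (le_abs_self _) (hB₀ s hs)) le_rfl
  have key : ∀ p q δ : ℝ, 0 < δ →
      Tendsto (fun t => ∫ v, (∫ y, vvwBump p q δ (v + a * y) ∂(K (xt t + t * v)))
        * F (xt t + t * v) ∂volume) l (𝓝 ((∫ u, vvwBump p q δ u) * f x)) := by
    intro p q δ hδ
    set g := vvwBump p q δ with hgdef
    set M : ℝ := |p| + |q| + δ + |a| * C + 1 with hMdef
    have hM0 : 0 < M := by positivity
    have hgzero : ∀ v y : ℝ, M < |v| → |y| ≤ C → g (v + a * y) = 0 := by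
      intro v y hv hy
      refine vvwBump_eq_zero hδ fun hmem => ?_
      have hay : |a * y| ≤ |a| * C := by
        rw [abs_mul]; exact mul_le_mul_of_nonneg_left hy (abs_nonneg a)
      have h1 : |v + a * y| ≤ |p| + |q| + δ := by
        refine abs_le.mpr ⟨?_, ?_⟩
        · have h := hmem.1
          have := neg_abs_le p
          linarith [abs_nonneg q]
        · have h := hmem.2
          have := le_abs_self q
          linarith [abs_nonneg p]
      have h2 : |v| ≤ |v + a * y| + |a * y| := by
        calc |v| = |v + a * y + -(a * y)| := by ring_nf
          _ ≤ |v + a * y| + |-(a * y)| := abs_add_le _ _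
          _ = |v + a * y| + |a * y| := by rw [abs_neg]
      linarith
    set D : ℝ → ℝ := fun v => B * (Icc (-M) M).indicator (fun _ => (1:ℝ)) v with hDdef
    have hDint : Integrable D volume := by
      refine Integrable.const_mul ?_ B
      rw [integrable_indicator_iff measurableSet_Icc]
      exact integrableOn_const (by rw [Real.volume_Icc]; exact ENNReal.ofReal_ne_top)
    have hInner01 : ∀ s v : ℝ,
        0 ≤ (∫ y, g (v + a * y) ∂(K s)) ∧ (∫ y, g (v + a * y) ∂(K s)) ≤ 1 := by
      intro s v
      have hgint : Integrable (fun y => g (v + a * y)) (K s) := by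
        refine (integrable_const (1:ℝ)).mono' ?_ (ae_of_all _ fun y => ?_)
        · exact ((vvwBump_continuous p q δ).comp
            (continuous_const.add (continuous_const.mul continuous_id))).aestronglyMeasurable
        · rw [Real.norm_eq_abs, abs_of_nonneg (vvwBump_nonneg _ _ _ _)]
          exact vvwBump_le_one _ _ _ _
      refine ⟨integral_nonneg fun y => vvwBump_nonneg _ _ _ _, ?_⟩
      calc (∫ y, g (v + a * y) ∂(K s)) ≤ ∫ _, (1:ℝ) ∂(K s) :=
            integral_mono hgint (integrable_const 1) fun y => vvwBump_le_one _ _ _ _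
        _ = 1 := by simp
    have hmeas : ∀ t : ℝ, t ≠ 0 → AEStronglyMeasurable
        (fun v => (∫ y, g (v + a * y) ∂(K (xt t + t * v))) * F (xt t + t * v)) volume := by
      intro t ht
      have hm : Measurable fun v : ℝ => xt t + t * v := (measurable_const_mul t).const_add (xt t)
      have h1 : StronglyMeasurable fun v =>
          ∫ y, g (v + a * y) ∂((K.comap (fun v => xt t + t * v) hm) v) := by
        have := StronglyMeasurable.integral_kernel_prod_right' (κ := K.comap _ hm)
          (f := fun z : ℝ × ℝ => g (z.1 + a * z.2))
          (((vvwBump_continuous p q δ).comp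
            (continuous_fst.add (continuous_const.mul continuous_snd))).stronglyMeasurable)
        exact this
      have h1' : StronglyMeasurable fun v => ∫ y, g (v + a * y) ∂(K (xt t + t * v)) := by
        have heq : (fun v => ∫ y, g (v + a * y) ∂((K.comap (fun v => xt t + t * v) hm) v))
            = fun v => ∫ y, g (v + a * y) ∂(K (xt t + t * v)) := by
          funext v
          rw [Kernel.comap_apply]
        rwa [heq] at h1
      exact h1'.aestronglyMeasurable.mul
        (hFaem.comp_quasiMeasurePreserving (vvwQMP ht)).aestronglyMeasurable
    have hbound : ∀ᶠ t in l, ∀ᵐ v ∂(volume : Measure ℝ),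
        ‖(∫ y, g (v + a * y) ∂(K (xt t + t * v))) * F (xt t + t * v)‖ ≤ D v := by
      have hxten : ∀ᶠ t in l, |xt t - x| < δ₀ / 2 := by
        have h := Metric.tendsto_nhds.mp hxt (δ₀/2) (by positivity)
        simpa [Real.dist_eq] using h
      have htsm : ∀ᶠ t in l, t * (M + 1) < δ₀ / 2 := by
        have hid : Tendsto (fun t : ℝ => t) l (𝓝 0) := tendsto_id.mono_right nhdsWithin_le_nhds
        have h2 : Tendsto (fun t : ℝ => t * (M + 1)) l (𝓝 0) := by
          simpa using hid.mul_const (M + 1)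
        exact h2.eventually_lt_const (by positivity)
      filter_upwards [hxten, htsm, self_mem_nhdsWithin] with t hxten htM ht'
      have ht : (0:ℝ) < t := ht'
      have hsuppv := vvwQMP_ae (vvwQMP (b := xt t) (ne_of_gt ht)) hsupp
      have hFG₀' : ∀ᵐ s ∂(volume : Measure ℝ), F s = G₀ s := hFG₀
      have hFGv := vvwQMP_ae (vvwQMP (b := xt t) (ne_of_gt ht)) hFG₀'
      filter_upwards [hsuppv, hFGv] with v hsv hFv
      have hψ0 : 0 ≤ (∫ y, g (v + a * y) ∂(K (xt t + t * v))) * F (xt t + t * v) :=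
        mul_nonneg (hInner01 _ v).1 (hF0 _)
      rw [Real.norm_eq_abs, abs_of_nonneg hψ0]
      by_cases hvM : |v| ≤ M
      · have hvIcc : v ∈ Icc (-M) M := abs_le.mp hvM
        have htv := abs_le.mp (show |t * v| ≤ t * M by
          rw [abs_mul, abs_of_pos ht]
          exact mul_le_mul_of_nonneg_left hvM ht.le)
        have hxx := abs_lt.mp hxten
        have hsvIcc : xt t + t * v ∈ Icc (x - δ₀) (x + δ₀) := by
          constructor <;> nlinarith
        calc (∫ y, g (v + a * y) ∂(K (xt t + t * v))) * F (xt t + t * v)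
            ≤ 1 * B := mul_le_mul (hInner01 _ v).2 (hFB _ hsvIcc) (hF0 _) zero_le_one
          _ = D v := by rw [hDdef]; simp only [indicator_of_mem hvIcc]; ring
      · push_neg at hvM
        have hzero : (∫ y, g (v + a * y) ∂(K (xt t + t * v))) * F (xt t + t * v) = 0 := by
          by_cases hF : F (xt t + t * v) = 0
          · rw [hF, mul_zero]
          · have hG : G₀ (xt t + t * v) ≠ 0 := by rw [← hFv]; exact hF
            have hKs := hsv hG
            have hint0 : ∫ y, g (v + a * y) ∂(K (xt t + t * v)) = 0 := by
              refine integral_eq_zero_of_ae ?_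
              have hyIcc : ∀ᵐ y ∂(K (xt t + t * v)), y ∈ Icc (-C) C := by
                rw [ae_iff]
                have : {y : ℝ | ¬ y ∈ Icc (-C) C} = (Icc (-C) C)ᶜ := rfl
                rw [this]
                exact hKs
              filter_upwards [hyIcc] with y hy
              exact hgzero v y hvM (abs_le.mpr ⟨neg_le.mp (neg_le_of_neg_le hy.1), hy.2⟩)
            rw [hint0, zero_mul]
        rw [hzero, hDdef]
        have hnot : v ∉ Icc (-M) M := fun hmem => (abs_le.mpr hmem).not_gt hvM
        simp only [indicator_of_notMem hnot, mul_zero, le_refl]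
    have hlim : ∀ᵐ v ∂(volume : Measure ℝ), Tendsto
        (fun t => (∫ y, g (v + a * y) ∂(K (xt t + t * v))) * F (xt t + t * v)) l
        (𝓝 ((∫ y, g (v + a * y) ∂(K x)) * f x)) := by
      refine ae_of_all _ fun v => ?_
      have hpath : Tendsto (fun t => xt t + t * v) l (𝓝 x) := by
        have hid : Tendsto (fun t : ℝ => t) l (𝓝 0) := tendsto_id.mono_right nhdsWithin_le_nhds
        have h2 : Tendsto (fun t : ℝ => t * v) l (𝓝 0) := by simpa using hid.mul_const v
        have := hxt.add h2
        simpa using this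
      have hgcont : Continuous fun y => g (v + a * y) :=
        (vvwBump_continuous p q δ).comp
          (continuous_const.add (continuous_const.mul continuous_id))
      have hgbd : ∃ C', ∀ y : ℝ, |g (v + a * y)| ≤ C' :=
        ⟨1, fun y => by
          rw [abs_of_nonneg (vvwBump_nonneg _ _ _ _)]; exact vvwBump_le_one _ _ _ _⟩
      have hGlim := (hKweak (fun y => g (v + a * y)) hgcont hgbd).comp hpath
      have hFlim : Tendsto (fun t => F (xt t + t * v)) l (𝓝 (f x)) := by
        have hmax : Tendsto (fun s => max (f s) 0) (𝓝 x) (𝓝 (max (f x) 0)) :=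
          hcont_at.max continuousAt_const
        have h1 : Tendsto (fun t => max (f (xt t + t * v)) 0) l (𝓝 (max (f x) 0)) :=
          hmax.comp hpath
        rw [max_eq_left hfx0] at h1
        refine Tendsto.congr' ?_ h1
        have hUev : ∀ᶠ s in 𝓝 x, s ∈ U' := hU'open.mem_nhds hxU'
        filter_upwards [hpath.eventually hUev] with t htU
        simp only [hFdef, if_pos htU]
      exact hGlim.mul hFlim
    have hDCT := tendsto_integral_filter_of_dominated_convergence D
      (by filter_upwards [self_mem_nhdsWithin] with t ht
          exact hmeas t (ne_of_gt (show (0:ℝ) < t from ht)))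
      hbound hDint hlim
    have hval : ∫ v, (∫ y, g (v + a * y) ∂(K x)) * f x ∂volume = (∫ u, g u) * f x := by
      rw [integral_mul_const]
      congr 1
      exact vvwSwap (K x) a hδ
    rwa [hval] at hDCT
  -- generic facts for comparison arguments
  have hgintK : ∀ p q δ s v : ℝ, Integrable (fun y => vvwBump p q δ (v + a * y)) (K s) := by
    intro p q δ s v
    refine (integrable_const (1:ℝ)).mono' ?_ (ae_of_all _ fun y => ?_)
    · exact ((vvwBump_continuous p q δ).comp
        (continuous_const.add (continuous_const.mul continuous_id))).aestronglyMeasurable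
    · rw [Real.norm_eq_abs, abs_of_nonneg (vvwBump_nonneg _ _ _ _)]
      exact vvwBump_le_one _ _ _ _
  have hInner01 : ∀ p q δ s v : ℝ,
      0 ≤ (∫ y, vvwBump p q δ (v + a * y) ∂(K s))
        ∧ (∫ y, vvwBump p q δ (v + a * y) ∂(K s)) ≤ 1 := by
    intro p q δ s v
    refine ⟨integral_nonneg fun y => vvwBump_nonneg _ _ _ _, ?_⟩
    calc (∫ y, vvwBump p q δ (v + a * y) ∂(K s)) ≤ ∫ _, (1:ℝ) ∂(K s) :=
          integral_mono (hgintK p q δ s v) (integrable_const 1) fun y => vvwBump_le_one _ _ _ _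
      _ = 1 := by simp
  have hK1 : ∀ (s : ℝ) (S : Set ℝ), (K s S).toReal ≤ 1 := by
    intro s S
    have h := prob_le_one (μ := K s) (s := S)
    simpa using ENNReal.toReal_mono ENNReal.one_ne_top h
  have hmeasJ : ∀ t : ℝ, t ≠ 0 → AEStronglyMeasurable
      (fun v => (K (xt t + t * v) {y | 0 < v + af t * y ∧ v + af t * y ≤ cf t}).toReal
        * F (xt t + t * v)) volume := by
    intro t ht
    have hm : Measurable fun v : ℝ => xt t + t * v := (measurable_const_mul t).const_add (xt t)
    have hTm : MeasurableSet {z : ℝ × ℝ | 0 < z.1 + af t * z.2 ∧ z.1 + af t * z.2 ≤ cf t} := by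
      have hEq : {z : ℝ × ℝ | 0 < z.1 + af t * z.2 ∧ z.1 + af t * z.2 ≤ cf t}
          = (fun z : ℝ × ℝ => z.1 + af t * z.2) ⁻¹' (Ioc 0 (cf t)) := rfl
      rw [hEq]
      exact (measurable_fst.add (measurable_snd.const_mul (af t))) measurableSet_Ioc
    have h1 := Kernel.measurable_kernel_prodMk_left (κ := K.comap (fun v => xt t + t * v) hm) hTm
    have heq : (fun v => (K.comap (fun v => xt t + t * v) hm) v
        (Prod.mk v ⁻¹' {z : ℝ × ℝ | 0 < z.1 + af t * z.2 ∧ z.1 + af t * z.2 ≤ cf t}))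
        = fun v => K (xt t + t * v) {y | 0 < v + af t * y ∧ v + af t * y ≤ cf t} := by
      funext v
      rw [Kernel.comap_apply]
      rfl
    rw [heq] at h1
    exact (h1.ennreal_toReal.aestronglyMeasurable).mul
      (hFaem.comp_quasiMeasurePreserving (vvwQMP ht)).aestronglyMeasurable
  have hJint : ∀ t : ℝ, 0 < t → Integrable (fun v =>
      (K (xt t + t * v) {y | 0 < v + af t * y ∧ v + af t * y ≤ cf t}).toReal
        * F (xt t + t * v)) volume := by
    intro t ht
    refine (vvwIntegrableAffine hFint (xt t) (ne_of_gt ht)).mono' (hmeasJ t (ne_of_gt ht))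
      (ae_of_all _ fun v => ?_)
    rw [Real.norm_eq_abs, abs_of_nonneg (mul_nonneg ENNReal.toReal_nonneg (hF0 _))]
    calc (K (xt t + t * v) _).toReal * F (xt t + t * v)
        ≤ 1 * F (xt t + t * v) := mul_le_mul (hK1 _ _) le_rfl (hF0 _) zero_le_one
      _ = F (xt t + t * v) := one_mul _
  have hmeasG : ∀ p q δ t : ℝ, t ≠ 0 → AEStronglyMeasurable
      (fun v => (∫ y, vvwBump p q δ (v + a * y) ∂(K (xt t + t * v))) * F (xt t + t * v))
        volume := by
    intro p q δ t ht
    have hm : Measurable fun v : ℝ => xt t + t * v := (measurable_const_mul t).const_add (xt t)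
    have h1 : StronglyMeasurable fun v =>
        ∫ y, vvwBump p q δ (v + a * y) ∂((K.comap (fun v => xt t + t * v) hm) v) := by
      have := StronglyMeasurable.integral_kernel_prod_right' (κ := K.comap _ hm)
        (f := fun z : ℝ × ℝ => vvwBump p q δ (z.1 + a * z.2))
        (((vvwBump_continuous p q δ).comp
          (continuous_fst.add (continuous_const.mul continuous_snd))).stronglyMeasurable)
      exact this
    have h1' : StronglyMeasurable fun v =>
        ∫ y, vvwBump p q δ (v + a * y) ∂(K (xt t + t * v)) := by
      have heq : (fun v => ∫ y, vvwBump p q δ (v + a * y)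
          ∂((K.comap (fun v => xt t + t * v) hm) v))
          = fun v => ∫ y, vvwBump p q δ (v + a * y) ∂(K (xt t + t * v)) := by
        funext v
        rw [Kernel.comap_apply]
      rwa [heq] at h1
    exact h1'.aestronglyMeasurable.mul
      (hFaem.comp_quasiMeasurePreserving (vvwQMP ht)).aestronglyMeasurable
  have hGint : ∀ p q δ t : ℝ, 0 < t → Integrable (fun v =>
      (∫ y, vvwBump p q δ (v + a * y) ∂(K (xt t + t * v))) * F (xt t + t * v)) volume := by
    intro p q δ t ht
    refine (vvwIntegrableAffine hFint (xt t) (ne_of_gt ht)).mono' (hmeasG p q δ t (ne_of_gt ht))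
      (ae_of_all _ fun v => ?_)
    rw [Real.norm_eq_abs, abs_of_nonneg (mul_nonneg (hInner01 p q δ _ v).1 (hF0 _))]
    calc (∫ y, vvwBump p q δ (v + a * y) ∂(K (xt t + t * v))) * F (xt t + t * v)
        ≤ 1 * F (xt t + t * v) :=
          mul_le_mul (hInner01 p q δ _ v).2 le_rfl (hF0 _) zero_le_one
      _ = F (xt t + t * v) := one_mul _
  have hJtendsto : Tendsto J l (𝓝 (c * f x)) := by
    have hJnonneg : ∀ t, 0 ≤ J t := by
      intro t
      rw [hJdef]
      exact integral_nonneg fun v => mul_nonneg ENNReal.toReal_nonneg (hF0 _)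
    -- upper bound
    have hupper : ∀ ε : ℝ, 0 < ε → ∀ᶠ t in l, J t ≤ (c + 4*ε) * f x + ε := by
      intro ε hε
      have hkey := key (-ε) (c + ε) ε hε
      have hIle : (∫ u, vvwBump (-ε) (c + ε) ε u) ≤ c + 4*ε := by
        have h := vvwBump_integral_le (p := -ε) (q := c + ε) hε (by linarith)
        linarith
      have hJple : ∀ᶠ t in l,
          (∫ v, (∫ y, vvwBump (-ε) (c + ε) ε (v + a * y) ∂(K (xt t + t * v)))
            * F (xt t + t * v) ∂volume)
          < (∫ u, vvwBump (-ε) (c + ε) ε u) * f x + ε :=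
        hkey.eventually_lt_const (lt_add_of_pos_right _ hε)
      have hafev : ∀ᶠ t in l, |af t - a| < ε / (2*(C+1)) := by
        have h := Metric.tendsto_nhds.mp haf _ (show (0:ℝ) < ε / (2*(C+1)) by positivity)
        simpa [Real.dist_eq] using h
      have hcfev : ∀ᶠ t in l, cf t < c + ε/2 := hcf.eventually_lt_const (by linarith)
      filter_upwards [hafev, hcfev, self_mem_nhdsWithin, hJple] with t haf' hcf' ht' hJp'
      have ht : (0:ℝ) < t := ht'
      have hsuppv := vvwQMP_ae (vvwQMP (b := xt t) (ne_of_gt ht)) hsupp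
      have hFG₀' : ∀ᵐ s ∂(volume : Measure ℝ), F s = G₀ s := hFG₀
      have hFGv := vvwQMP_ae (vvwQMP (b := xt t) (ne_of_gt ht)) hFG₀'
      have hcomp : J t ≤ ∫ v, (∫ y, vvwBump (-ε) (c + ε) ε (v + a * y) ∂(K (xt t + t * v)))
          * F (xt t + t * v) ∂volume := by
        rw [hJdef]
        refine integral_mono_ae (hJint t ht) (hGint _ _ _ t ht) ?_
        filter_upwards [hsuppv, hFGv] with v hsv hFv
        by_cases hF : F (xt t + t * v) = 0
        · rw [hF, mul_zero, mul_zero]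
        · have hG : G₀ (xt t + t * v) ≠ 0 := by rw [← hFv]; exact hF
          have hKs := hsv hG
          refine mul_le_mul_of_nonneg_right ?_ (hF0 _)
          have hSm : MeasurableSet {y : ℝ | 0 < v + af t * y ∧ v + af t * y ≤ cf t} := by
            have hEq : {y : ℝ | 0 < v + af t * y ∧ v + af t * y ≤ cf t}
                = (fun y : ℝ => v + af t * y) ⁻¹' (Ioc 0 (cf t)) := rfl
            rw [hEq]
            exact ((measurable_const_mul (af t)).const_add v) measurableSet_Ioc
          rw [← measureReal_def, ← integral_indicator_one hSm]
          have hyIcc : ∀ᵐ y ∂(K (xt t + t * v)), y ∈ Icc (-C) C := by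
            rw [ae_iff]
            have hEq : {y : ℝ | ¬ y ∈ Icc (-C) C} = (Icc (-C) C)ᶜ := rfl
            rw [hEq]
            exact hKs
          refine integral_mono_ae ((integrable_const (1:ℝ)).indicator hSm)
            (hgintK _ _ _ _ v) ?_
          filter_upwards [hyIcc] with y hy
          by_cases hyS : y ∈ {y : ℝ | 0 < v + af t * y ∧ v + af t * y ≤ cf t}
          · rw [indicator_of_mem hyS]
            refine le_of_eq (vvwBump_eq_one hε ?_).symm
            obtain ⟨h1, h2⟩ := hyS
            have hyC : |y| ≤ C + 1 := by
              rw [abs_le]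
              exact ⟨by linarith [hy.1], by linarith [hy.2]⟩
            have hay : |af t * y - a * y| ≤ ε/2 := by
              rw [← sub_mul, abs_mul]
              calc |af t - a| * |y| ≤ (ε / (2*(C+1))) * (C+1) := by
                    apply mul_le_mul haf'.le hyC (abs_nonneg _) (by positivity)
                _ = ε/2 := by field_simp
            have hd := abs_le.mp hay
            constructor
            · linarith [hd.1]
            · linarith [hd.2]
          · rw [indicator_of_notMem hyS]
            exact vvwBump_nonneg _ _ _ _
      have hfin : (∫ u, vvwBump (-ε) (c + ε) ε u) * f x ≤ (c + 4*ε) * f x :=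
        mul_le_mul_of_nonneg_right hIle hfx0
      linarith
    -- lower bound
    have hlower : ∀ ε : ℝ, 0 < ε → ∀ᶠ t in l, (c - 2*ε) * f x - ε ≤ J t := by
      intro ε hε
      by_cases hc2 : c ≤ 2*ε
      · refine Eventually.of_forall fun t => ?_
        have h1 : (c - 2*ε) * f x ≤ 0 := mul_nonpos_iff.mpr (Or.inr ⟨by linarith, hfx0⟩)
        linarith [hJnonneg t]
      · push_neg at hc2
        have hδ2 : (0:ℝ) < ε/2 := by positivity
        have hkey := key ε (c - ε) (ε/2) hδ2
        have hIge : c - 2*ε ≤ ∫ u, vvwBump ε (c - ε) (ε/2) u := by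
          have h := vvwBump_le_integral (p := ε) (q := c - ε) hδ2 (by linarith)
          linarith
        have hJmgt : ∀ᶠ t in l,
            (∫ u, vvwBump ε (c - ε) (ε/2) u) * f x - ε
            < ∫ v, (∫ y, vvwBump ε (c - ε) (ε/2) (v + a * y) ∂(K (xt t + t * v)))
              * F (xt t + t * v) ∂volume :=
          hkey.eventually_const_lt (by linarith [mul_le_mul_of_nonneg_right hIge hfx0])
        have hafev : ∀ᶠ t in l, |af t - a| < ε / (8*(C+1)) := by
          have h := Metric.tendsto_nhds.mp haf _ (show (0:ℝ) < ε / (8*(C+1)) by positivity)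
          simpa [Real.dist_eq] using h
        have hcfev : ∀ᶠ t in l, c - ε/8 < cf t := hcf.eventually_const_lt (by linarith)
        filter_upwards [hafev, hcfev, self_mem_nhdsWithin, hJmgt] with t haf' hcf' ht' hJm'
        have ht : (0:ℝ) < t := ht'
        have hsuppv := vvwQMP_ae (vvwQMP (b := xt t) (ne_of_gt ht)) hsupp
        have hFG₀' : ∀ᵐ s ∂(volume : Measure ℝ), F s = G₀ s := hFG₀
        have hFGv := vvwQMP_ae (vvwQMP (b := xt t) (ne_of_gt ht)) hFG₀'
        have hcomp : (∫ v, (∫ y, vvwBump ε (c - ε) (ε/2) (v + a * y) ∂(K (xt t + t * v)))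
            * F (xt t + t * v) ∂volume) ≤ J t := by
          rw [hJdef]
          refine integral_mono_ae (hGint _ _ _ t ht) (hJint t ht) ?_
          filter_upwards [hsuppv, hFGv] with v hsv hFv
          by_cases hF : F (xt t + t * v) = 0
          · rw [hF, mul_zero, mul_zero]
          · have hG : G₀ (xt t + t * v) ≠ 0 := by rw [← hFv]; exact hF
            have hKs := hsv hG
            refine mul_le_mul_of_nonneg_right ?_ (hF0 _)
            have hSm : MeasurableSet {y : ℝ | 0 < v + af t * y ∧ v + af t * y ≤ cf t} := by
              have hEq : {y : ℝ | 0 < v + af t * y ∧ v + af t * y ≤ cf t}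
                  = (fun y : ℝ => v + af t * y) ⁻¹' (Ioc 0 (cf t)) := rfl
              rw [hEq]
              exact ((measurable_const_mul (af t)).const_add v) measurableSet_Ioc
            rw [← measureReal_def, ← integral_indicator_one hSm]
            have hyIcc : ∀ᵐ y ∂(K (xt t + t * v)), y ∈ Icc (-C) C := by
              rw [ae_iff]
              have hEq : {y : ℝ | ¬ y ∈ Icc (-C) C} = (Icc (-C) C)ᶜ := rfl
              rw [hEq]
              exact hKs
            refine integral_mono_ae (hgintK _ _ _ _ v)
              ((integrable_const (1:ℝ)).indicator hSm) ?_
            filter_upwards [hyIcc] with y hy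
            by_cases hb : vvwBump ε (c - ε) (ε/2) (v + a * y) = 0
            · rw [hb]
              exact indicator_nonneg (fun _ _ => zero_le_one) y
            · have hmem := vvwBump_pos_mem hδ2 hb
              have hyC : |y| ≤ C + 1 := by
                rw [abs_le]
                exact ⟨by linarith [hy.1], by linarith [hy.2]⟩
              have hay : |af t * y - a * y| ≤ ε/8 := by
                rw [← sub_mul, abs_mul]
                calc |af t - a| * |y| ≤ (ε / (8*(C+1))) * (C+1) := by
                      apply mul_le_mul haf'.le hyC (abs_nonneg _) (by positivity)
                  _ = ε/8 := by field_simp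
              have hd := abs_le.mp hay
              have hm1 := hmem.1
              have hm2 := hmem.2
              have hyS : y ∈ {y : ℝ | 0 < v + af t * y ∧ v + af t * y ≤ cf t} := by
                constructor
                · linarith
                · linarith
              rw [indicator_of_mem hyS]
              exact vvwBump_le_one _ _ _ _
        have hstep : (c - 2*ε) * f x ≤ (∫ u, vvwBump ε (c - ε) (ε/2) u) * f x :=
          mul_le_mul_of_nonneg_right hIge hfx0
        linarith
    -- assembly
    rw [Metric.tendsto_nhds]
    intro ε' hε'
    have hden : (0:ℝ) < 4 * f x + 2 := by linarith
    set ε := ε' / (4 * f x + 2) with hεdef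
    have hεpos : 0 < ε := div_pos hε' hden
    have hεval : ε * (4 * f x + 2) = ε' := by
      rw [hεdef]
      field_simp
    filter_upwards [hupper ε hεpos, hlower ε hεpos] with t h1 h2
    rw [Real.dist_eq, abs_lt]
    constructor
    · nlinarith
    · nlinarith
  exact Tendsto.congr' (EventuallyEq.symm hident) hJtendsto
end

section
/- Let (Ω, ℱ, ℙ) be a probability space, let X = (X₁, X₂) be an ℝ²-valued random variable whose law has a Lebesgue density on ℝ² that is bounded on a neighbourhood of a point x = (x₁, x₂), and for each t > 0 let Y_t = (Y_{1,t}, Y_{2,t}) be an ℝ²-valued random variable on Ω with sup_{t>0} sup_ω ‖Y_t(ω)‖ < ∞. Then for all families (x_t) in ℝ², (a_t) in ℝ, (b_t) in ℝ² with x_t = (x_{1,t}, x_{2,t}) → x, a_t → a, b_t = (b_{1,t}, b_{2,t}) → b as t ↓ 0, one has (1/t) · ℙ( x_{1,t} < X₁ + t·a_t·Y_{1,t} ≤ x_{1,t} + t·b_{1,t} and x_{2,t} < X₂ + t·a_t·Y_{2,t} ≤ x_{2,t} + t·b_{2,t} ) → 0 as t ↓ 0. -/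
open MeasureTheory ProbabilityTheory Filter Topology

/-- The "event II does not contribute" step in the proof of Lemma 3.3 of
van der Vaart & Wellner: the probability that both coordinates of
`X + t a_t Y_t` fall in intervals of length `O(t)` is `o(t)`. -/
theorem stmt_4
    {Ω : Type*} [MeasurableSpace Ω] (P : Measure Ω) [IsProbabilityMeasure P]
    (X : Ω → ℝ × ℝ) (Yt : ℝ → Ω → ℝ × ℝ)
    (hX : Measurable X) (hYt : ∀ t, Measurable (Yt t))
    (f : ℝ × ℝ → ℝ) (x : ℝ × ℝ)
    -- the law of X has a Lebesgue density f on ℝ², bounded near x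
    (hdens : Measure.map X P = volume.withDensity fun s => ENNReal.ofReal (f s))
    (hfbd : ∃ U ∈ 𝓝 x, ∃ C, ∀ s ∈ U, f s ≤ C)
    -- the Y_t are uniformly bounded
    (hYtbd : ∃ C, ∀ t > (0 : ℝ), ∀ ω, ‖Yt t ω‖ ≤ C)
    -- the data of the conclusion
    (xt : ℝ → ℝ × ℝ) (af : ℝ → ℝ) (bf : ℝ → ℝ × ℝ) (a : ℝ) (b : ℝ × ℝ)
    (hxt : Tendsto xt (𝓝[>] (0 : ℝ)) (𝓝 x))
    (haf : Tendsto af (𝓝[>] (0 : ℝ)) (𝓝 a))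
    (hbf : Tendsto bf (𝓝[>] (0 : ℝ)) (𝓝 b)) :
    Tendsto
      (fun t => (1 / t) *
        (P {ω | ((xt t).1 < (X ω).1 + t * af t * (Yt t ω).1 ∧
              (X ω).1 + t * af t * (Yt t ω).1 ≤ (xt t).1 + t * (bf t).1) ∧
            (xt t).2 < (X ω).2 + t * af t * (Yt t ω).2 ∧
              (X ω).2 + t * af t * (Yt t ω).2 ≤ (xt t).2 + t * (bf t).2}).toReal)
      (𝓝[>] (0 : ℝ)) (𝓝 0) := by
  obtain ⟨Cy, hCy⟩ := hYtbd
  obtain ⟨U, hU, C, hC⟩ := hfbd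
  obtain ⟨ε, hε, hball⟩ := Metric.mem_nhds_iff.mp hU
  set Cy' := max Cy 0 with hCy'def
  set C' := max C 0 with hC'def
  have hCy0 : 0 ≤ Cy' := le_max_right _ _
  have hC0 : 0 ≤ C' := le_max_right _ _
  set K := (|a| + 1) * Cy' + (‖b‖ + 1) with hKdef
  have hK0 : 0 < K := by positivity
  have l1 : ∀ᶠ t in 𝓝[>] (0:ℝ), 0 < t := self_mem_nhdsWithin
  have l2 : ∀ᶠ t in 𝓝[>] (0:ℝ), |af t| ≤ |a| + 1 :=
    ((haf.abs).eventually_lt_const (by linarith)).mono fun t h => h.le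
  have l3 : ∀ᶠ t in 𝓝[>] (0:ℝ), ‖bf t‖ ≤ ‖b‖ + 1 :=
    ((hbf.norm).eventually_lt_const (by linarith)).mono fun t h => h.le
  have htK : Tendsto (fun t : ℝ => t * K) (𝓝[>] (0:ℝ)) (𝓝 0) := by
    have h0 : Tendsto (fun t : ℝ => t) (𝓝[>] (0:ℝ)) (𝓝 0) :=
      tendsto_id.mono_left nhdsWithin_le_nhds
    simpa using h0.mul_const K
  have l4 : ∀ᶠ t in 𝓝[>] (0:ℝ), t * K < ε / 2 :=
    htK.eventually_lt_const (by linarith)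
  have l5 : ∀ᶠ t in 𝓝[>] (0:ℝ), ‖xt t - x‖ < ε / 2 := by
    have : Tendsto (fun t => ‖xt t - x‖) (𝓝[>] (0:ℝ)) (𝓝 0) := by
      simpa using (hxt.sub_const x).norm
    exact this.eventually_lt_const (by linarith)
  have hnn : ∀ᶠ t in 𝓝[>] (0:ℝ), 0 ≤ (1 / t) *
      (P {ω | ((xt t).1 < (X ω).1 + t * af t * (Yt t ω).1 ∧
              (X ω).1 + t * af t * (Yt t ω).1 ≤ (xt t).1 + t * (bf t).1) ∧
            (xt t).2 < (X ω).2 + t * af t * (Yt t ω).2 ∧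
              (X ω).2 + t * af t * (Yt t ω).2 ≤ (xt t).2 + t * (bf t).2}).toReal := by
    filter_upwards [l1] with t ht
    positivity
  have hbound : ∀ᶠ t in 𝓝[>] (0:ℝ), (1 / t) *
      (P {ω | ((xt t).1 < (X ω).1 + t * af t * (Yt t ω).1 ∧
              (X ω).1 + t * af t * (Yt t ω).1 ≤ (xt t).1 + t * (bf t).1) ∧
            (xt t).2 < (X ω).2 + t * af t * (Yt t ω).2 ∧
              (X ω).2 + t * af t * (Yt t ω).2 ≤ (xt t).2 + t * (bf t).2}).toReal
      ≤ (C' * (4 * K ^ 2)) * t := by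
    filter_upwards [l1, l2, l3, l4, l5] with t ht ha2 hb2 ht4 ht5
    have htK' : t * K = t * ((|a| + 1) * Cy') + t * (‖b‖ + 1) := by
      rw [hKdef]; ring
    have hBnn : 0 ≤ t * (‖b‖ + 1) := by positivity
    have hAnn : 0 ≤ t * ((|a| + 1) * Cy') := by positivity
    have hYb : ∀ ω, |(Yt t ω).1| ≤ Cy' ∧ |(Yt t ω).2| ≤ Cy' := by
      intro ω
      have h := hCy t ht ω
      constructor
      · rw [← Real.norm_eq_abs]
        exact le_trans (norm_fst_le _) (h.trans (le_max_left _ _))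
      · rw [← Real.norm_eq_abs]
        exact le_trans (norm_snd_le _) (h.trans (le_max_left _ _))
    have hsub : {ω | ((xt t).1 < (X ω).1 + t * af t * (Yt t ω).1 ∧
              (X ω).1 + t * af t * (Yt t ω).1 ≤ (xt t).1 + t * (bf t).1) ∧
            (xt t).2 < (X ω).2 + t * af t * (Yt t ω).2 ∧
              (X ω).2 + t * af t * (Yt t ω).2 ≤ (xt t).2 + t * (bf t).2}
        ⊆ X ⁻¹' (Set.Icc ((xt t).1 - t * K) ((xt t).1 + t * K) ×ˢ
                 Set.Icc ((xt t).2 - t * K) ((xt t).2 + t * K)) := by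
      intro ω hω
      obtain ⟨⟨h1, h2⟩, h3, h4⟩ := hω
      obtain ⟨hY1, hY2⟩ := hYb ω
      have hb1 : |(bf t).1| ≤ ‖b‖ + 1 := by
        calc |(bf t).1| = ‖(bf t).1‖ := (Real.norm_eq_abs _).symm
          _ ≤ ‖bf t‖ := norm_fst_le _
          _ ≤ ‖b‖ + 1 := hb2
      have hb1' : |(bf t).2| ≤ ‖b‖ + 1 := by
        calc |(bf t).2| = ‖(bf t).2‖ := (Real.norm_eq_abs _).symm
          _ ≤ ‖bf t‖ := norm_snd_le _
          _ ≤ ‖b‖ + 1 := hb2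
      have key1 : |t * af t * (Yt t ω).1| ≤ t * ((|a| + 1) * Cy') := by
        rw [abs_mul, abs_mul, abs_of_pos ht, mul_assoc]
        exact mul_le_mul_of_nonneg_left
          (mul_le_mul ha2 hY1 (abs_nonneg _) (by positivity)) ht.le
      have key2 : |t * af t * (Yt t ω).2| ≤ t * ((|a| + 1) * Cy') := by
        rw [abs_mul, abs_mul, abs_of_pos ht, mul_assoc]
        exact mul_le_mul_of_nonneg_left
          (mul_le_mul ha2 hY2 (abs_nonneg _) (by positivity)) ht.le
      have habs1 := abs_le.mp key1
      have habs2 := abs_le.mp key2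
      have hbb1 : t * (bf t).1 ≤ t * (‖b‖ + 1) :=
        mul_le_mul_of_nonneg_left (abs_le.mp hb1).2 ht.le
      have hbb2 : t * (bf t).2 ≤ t * (‖b‖ + 1) :=
        mul_le_mul_of_nonneg_left (abs_le.mp hb1').2 ht.le
      refine Set.mem_preimage.mpr (Set.mem_prod.mpr ⟨Set.mem_Icc.mpr ⟨?_, ?_⟩,
        Set.mem_Icc.mpr ⟨?_, ?_⟩⟩)
      · linarith [habs1.2]
      · linarith [habs1.1]
      · linarith [habs2.2]
      · linarith [habs2.1]
    have hboxU : (Set.Icc ((xt t).1 - t * K) ((xt t).1 + t * K) ×ˢ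
                 Set.Icc ((xt t).2 - t * K) ((xt t).2 + t * K)) ⊆ U := by
      intro s hs
      apply hball
      rw [Set.mem_prod, Set.mem_Icc, Set.mem_Icc] at hs
      obtain ⟨hs1, hs2⟩ := hs
      have hx1 : |(xt t).1 - x.1| ≤ ‖xt t - x‖ := by
        rw [← Real.norm_eq_abs]
        exact norm_fst_le (xt t - x)
      have hx2 : |(xt t).2 - x.2| ≤ ‖xt t - x‖ := by
        rw [← Real.norm_eq_abs]
        exact norm_snd_le (xt t - x)
      have d1 : |s.1 - x.1| < ε := by
        calc |s.1 - x.1| = |(s.1 - (xt t).1) + ((xt t).1 - x.1)| := by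
              rw [sub_add_sub_cancel]
          _ ≤ |s.1 - (xt t).1| + |(xt t).1 - x.1| := abs_add_le _ _
          _ < ε / 2 + ε / 2 := by
              apply add_lt_add_of_le_of_lt
              · exact le_trans (abs_le.mpr ⟨by linarith [hs1.1], by linarith [hs1.2]⟩) ht4.le
              · linarith
          _ = ε := by ring
      have d2 : |s.2 - x.2| < ε := by
        calc |s.2 - x.2| = |(s.2 - (xt t).2) + ((xt t).2 - x.2)| := by
              rw [sub_add_sub_cancel]
          _ ≤ |s.2 - (xt t).2| + |(xt t).2 - x.2| := abs_add_le _ _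
          _ < ε / 2 + ε / 2 := by
              apply add_lt_add_of_le_of_lt
              · exact le_trans (abs_le.mpr ⟨by linarith [hs2.1], by linarith [hs2.2]⟩) ht4.le
              · linarith
          _ = ε := by ring
      rw [Metric.mem_ball, Prod.dist_eq]
      exact max_lt (by rwa [Real.dist_eq]) (by rwa [Real.dist_eq])
    have hmbox : MeasurableSet (Set.Icc ((xt t).1 - t * K) ((xt t).1 + t * K) ×ˢ
        Set.Icc ((xt t).2 - t * K) ((xt t).2 + t * K)) :=
      measurableSet_Icc.prod measurableSet_Icc
    have hPle : P {ω | ((xt t).1 < (X ω).1 + t * af t * (Yt t ω).1 ∧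
              (X ω).1 + t * af t * (Yt t ω).1 ≤ (xt t).1 + t * (bf t).1) ∧
            (xt t).2 < (X ω).2 + t * af t * (Yt t ω).2 ∧
              (X ω).2 + t * af t * (Yt t ω).2 ≤ (xt t).2 + t * (bf t).2}
        ≤ ENNReal.ofReal C' * (ENNReal.ofReal (2 * (t * K)) * ENNReal.ofReal (2 * (t * K))) := by
      have hvol : volume (Set.Icc ((xt t).1 - t * K) ((xt t).1 + t * K) ×ˢ
          Set.Icc ((xt t).2 - t * K) ((xt t).2 + t * K))
          = ENNReal.ofReal (2 * (t * K)) * ENNReal.ofReal (2 * (t * K)) := by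
        rw [Measure.volume_eq_prod, Measure.prod_prod, Real.volume_Icc, Real.volume_Icc]
        congr 2 <;> ring
      calc P _ ≤ P (X ⁻¹' (Set.Icc ((xt t).1 - t * K) ((xt t).1 + t * K) ×ˢ
            Set.Icc ((xt t).2 - t * K) ((xt t).2 + t * K))) := measure_mono hsub
        _ = (Measure.map X P) (Set.Icc ((xt t).1 - t * K) ((xt t).1 + t * K) ×ˢ
            Set.Icc ((xt t).2 - t * K) ((xt t).2 + t * K)) :=
            (Measure.map_apply hX hmbox).symm
        _ = ∫⁻ s in (Set.Icc ((xt t).1 - t * K) ((xt t).1 + t * K) ×ˢ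
            Set.Icc ((xt t).2 - t * K) ((xt t).2 + t * K)), ENNReal.ofReal (f s) := by
            rw [hdens, withDensity_apply _ hmbox]
        _ ≤ ∫⁻ _ in (Set.Icc ((xt t).1 - t * K) ((xt t).1 + t * K) ×ˢ
            Set.Icc ((xt t).2 - t * K) ((xt t).2 + t * K)), ENNReal.ofReal C' := by
            apply setLIntegral_mono' hmbox
            intro s hs
            exact ENNReal.ofReal_le_ofReal (le_trans (hC s (hboxU hs)) (le_max_left _ _))
        _ = ENNReal.ofReal C' * (ENNReal.ofReal (2 * (t * K)) * ENNReal.ofReal (2 * (t * K))) := by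
            rw [setLIntegral_const, hvol, mul_comm]
    have htoReal : (P {ω | ((xt t).1 < (X ω).1 + t * af t * (Yt t ω).1 ∧
              (X ω).1 + t * af t * (Yt t ω).1 ≤ (xt t).1 + t * (bf t).1) ∧
            (xt t).2 < (X ω).2 + t * af t * (Yt t ω).2 ∧
              (X ω).2 + t * af t * (Yt t ω).2 ≤ (xt t).2 + t * (bf t).2}).toReal
        ≤ C' * ((2 * (t * K)) * (2 * (t * K))) := by
      have hfin : ENNReal.ofReal C' * (ENNReal.ofReal (2 * (t * K)) * ENNReal.ofReal (2 * (t * K)))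
          ≠ ⊤ := by
        exact ENNReal.mul_ne_top ENNReal.ofReal_ne_top
          (ENNReal.mul_ne_top ENNReal.ofReal_ne_top ENNReal.ofReal_ne_top)
      have h := ENNReal.toReal_mono hfin hPle
      rwa [← ENNReal.ofReal_mul (by positivity), ← ENNReal.ofReal_mul hC0,
        ENNReal.toReal_ofReal (by positivity)] at h
    calc (1 / t) * (P _).toReal
        ≤ (1 / t) * (C' * ((2 * (t * K)) * (2 * (t * K)))) :=
          mul_le_mul_of_nonneg_left htoReal (by positivity)
      _ = (C' * (4 * K ^ 2)) * t := by
          field_simp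
          ring
  have hlim : Tendsto (fun t : ℝ => (C' * (4 * K ^ 2)) * t) (𝓝[>] (0:ℝ)) (𝓝 0) := by
    have h0 : Tendsto (fun t : ℝ => t) (𝓝[>] (0:ℝ)) (𝓝 0) :=
      tendsto_id.mono_left nhdsWithin_le_nhds
    simpa using h0.const_mul (C' * (4 * K ^ 2))
  exact squeeze_zero' hnn hbound hlim
end

section
/- Let (Ω, ℱ, ℙ) be a probability space, let X and Y be real-valued random variables on Ω, and for each t > 0 let Y_t be a real-valued random variable on Ω. Assume the law of X has a Lebesgue density that is bounded on a neighbourhood of a point x ∈ ℝ, that sup_ω |Y_t(ω) − Y(ω)| → 0 as t ↓ 0, and that sup_ω |Y(ω)| < ∞. Then for every continuous g : ℝ → ℝ and all families (x_t), (a_t), (b_t) of real numbers with x_t → x, a_t → a, b_t → b and b_t ≥ 0 as t ↓ 0, one has (1/t) · E[ |g(Y_t) − g(Y)| · 1{x_t < X + t·a_t·Y_t ≤ x_t + t·b_t} ] → 0 as t ↓ 0. -/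
open MeasureTheory Filter Topology

/-- The step in the proof of Lemma 3.2 of van der Vaart & Wellner in which `Y_t`
is replaced by `Y` in the integrand:
`t⁻¹ E[|g(Y_t) − g(Y)| 1{x_t < X + t a_t Y_t ≤ x_t + t b_t}] → 0`. -/
theorem stmt_11
    {Ω : Type*} [MeasurableSpace Ω] (P : Measure Ω) [IsProbabilityMeasure P]
    (X Y : Ω → ℝ) (Yt : ℝ → Ω → ℝ)
    (hX : Measurable X) (hY : Measurable Y) (hYt : ∀ t, Measurable (Yt t))
    (f : ℝ → ℝ) (x : ℝ)
    -- the law of X has a Lebesgue density f, bounded near x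
    (hdens : Measure.map X P = volume.withDensity fun s => ENNReal.ofReal (f s))
    (hfbd : ∃ U ∈ 𝓝 x, ∃ C, ∀ s ∈ U, f s ≤ C)
    -- ‖Y_t − Y‖_∞ → 0 as t ↓ 0 and ‖Y‖_∞ < ∞
    (hYtY : ∀ ε > 0, ∀ᶠ t in 𝓝[>] (0 : ℝ), ∀ ω, |Yt t ω - Y ω| ≤ ε)
    (hYbd : ∃ C, ∀ ω, |Y ω| ≤ C)
    -- the data of the conclusion
    (g : ℝ → ℝ) (hg : Continuous g)
    (xt af bf : ℝ → ℝ) (a b : ℝ)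
    (hxt : Tendsto xt (𝓝[>] (0 : ℝ)) (𝓝 x))
    (haf : Tendsto af (𝓝[>] (0 : ℝ)) (𝓝 a))
    (hbf : Tendsto bf (𝓝[>] (0 : ℝ)) (𝓝 b))
    (hbf0 : ∀ᶠ t in 𝓝[>] (0 : ℝ), 0 ≤ bf t) :
    Tendsto
      (fun t => (1 / t) *
        ∫ ω in {ω | xt t < X ω + t * af t * Yt t ω ∧
            X ω + t * af t * Yt t ω ≤ xt t + t * bf t},
          |g (Yt t ω) - g (Y ω)| ∂P)
      (𝓝[>] (0 : ℝ)) (𝓝 0) := by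
  obtain ⟨C₀, hC₀⟩ := hYbd
  set C : ℝ := max C₀ 0 with hCdef
  have hC : ∀ ω, |Y ω| ≤ C := fun ω => (hC₀ ω).trans (le_max_left _ _)
  have hC0 : (0:ℝ) ≤ C := le_max_right _ _
  obtain ⟨U, hU, Cf, hCf⟩ := hfbd
  set D : ℝ := max Cf 0 with hDdef
  have hD : ∀ s ∈ U, f s ≤ D := fun s hs => (hCf s hs).trans (le_max_left _ _)
  have hD0 : (0:ℝ) ≤ D := le_max_right _ _
  obtain ⟨r, hr, hball⟩ := Metric.mem_nhds_iff.mp hU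
  set M : ℝ := (|a| + 1) * (C + 1) + (|b| + 1) with hMdef
  have hM0 : (0:ℝ) < M := by positivity
  rw [NormedAddCommGroup.tendsto_nhds_zero]
  intro ε hε
  set δ : ℝ := ε / (2 * M * D + 1) with hδdef
  have hδ : 0 < δ := by positivity
  -- uniform continuity of g on a compact interval
  have hUC := (isCompact_Icc (a := -(C+2)) (b := C+2)).uniformContinuousOn_of_continuous
    hg.continuousOn
  rw [Metric.uniformContinuousOn_iff] at hUC
  obtain ⟨η, hη, hηg⟩ := hUC δ hδ
  -- eventual facts
  have ev1 : ∀ᶠ t in 𝓝[>] (0:ℝ), ∀ ω, |Yt t ω - Y ω| ≤ min (η/2) 1 :=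
    hYtY _ (lt_min (by positivity) one_pos)
  have ev2 : ∀ᶠ t in 𝓝[>] (0:ℝ), |af t| ≤ |a| + 1 := by
    have : Tendsto (fun t => |af t|) (𝓝[>] (0:ℝ)) (𝓝 |a|) := haf.abs
    filter_upwards [this.eventually_le_const (show |a| < |a| + 1 by linarith)] with t ht
    exact ht
  have ev3 : ∀ᶠ t in 𝓝[>] (0:ℝ), bf t ≤ |b| + 1 := by
    filter_upwards [hbf.eventually_le_const (show b < |b| + 1 by
      have := le_abs_self b; linarith)] with t ht using ht
  have ev4 : ∀ᶠ t in 𝓝[>] (0:ℝ), |xt t - x| < r/2 := by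
    have := Metric.tendsto_nhds.mp hxt (r/2) (by positivity)
    filter_upwards [this] with t ht
    simpa [Real.dist_eq] using ht
  have ev5 : ∀ᶠ t in 𝓝[>] (0:ℝ), t * M < r/2 := by
    have h1 : Tendsto (fun t : ℝ => t * M) (𝓝[>] (0:ℝ)) (𝓝 (0 * M)) :=
      (tendsto_id.mono_left nhdsWithin_le_nhds).mul_const M
    rw [zero_mul] at h1
    exact h1.eventually_lt_const (by positivity)
  have ev6 : ∀ᶠ t in 𝓝[>] (0:ℝ), 0 < t := eventually_mem_nhdsWithin
  filter_upwards [ev1, ev2, ev3, ev4, ev5, ev6, hbf0] with t h1 h2 h3 h4 h5 ht hb0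
  -- pointwise bound on the integrand
  have hYtb : ∀ ω, |Yt t ω| ≤ C + 1 := by
    intro ω
    have := h1 ω
    have h' : |Yt t ω - Y ω| ≤ 1 := this.trans (min_le_right _ _)
    have := hC ω
    calc |Yt t ω| = |Y ω + (Yt t ω - Y ω)| := by ring_nf
      _ ≤ |Y ω| + |Yt t ω - Y ω| := abs_add_le _ _
      _ ≤ C + 1 := by linarith
  have hptw : ∀ ω, |g (Yt t ω) - g (Y ω)| ≤ δ := by
    intro ω
    have hu : Yt t ω ∈ Set.Icc (-(C+2)) (C+2) := by
      have := hYtb ω; rw [abs_le] at this; constructor <;> linarith [this.1, this.2]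
    have hv : Y ω ∈ Set.Icc (-(C+2)) (C+2) := by
      have := hC ω; rw [abs_le] at this; constructor <;> linarith [this.1, this.2]
    have hd : dist (Yt t ω) (Y ω) < η := by
      rw [Real.dist_eq]
      exact lt_of_le_of_lt ((h1 ω).trans (min_le_left _ _)) (by linarith)
    have := hηg _ hu _ hv hd
    rw [Real.dist_eq] at this
    exact this.le
  -- the event and its measure
  set E : Set Ω := {ω | xt t < X ω + t * af t * Yt t ω ∧
      X ω + t * af t * Yt t ω ≤ xt t + t * bf t} with hEdef
  have hEsub : E ⊆ X ⁻¹' Set.Ioc (xt t - t * M) (xt t + t * M) := by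
    intro ω ⟨hlo, hhi⟩
    have habs : |t * af t * Yt t ω| ≤ t * ((|a| + 1) * (C + 1)) := by
      rw [abs_mul, abs_mul, abs_of_pos ht, mul_assoc]
      exact mul_le_mul_of_nonneg_left
        (mul_le_mul h2 (hYtb ω) (abs_nonneg _) (by positivity)) ht.le
    rw [abs_le] at habs
    have hMM : t * ((|a| + 1) * (C + 1)) + t * (|b| + 1) = t * M := by
      rw [hMdef]; ring
    have h6 : (0:ℝ) ≤ t * (|b| + 1) := by positivity
    have hbft : t * bf t ≤ t * (|b| + 1) := mul_le_mul_of_nonneg_left h3 ht.le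
    constructor
    · linarith [habs.2]
    · linarith [habs.1]
  have hEmeas : MeasurableSet E := by
    apply MeasurableSet.inter
    · exact measurableSet_lt measurable_const (hX.add ((measurable_const.mul
        measurable_const).mul (hYt t)))
    · exact measurableSet_le (hX.add ((measurable_const.mul
        measurable_const).mul (hYt t))) measurable_const
  have hIoc : Set.Ioc (xt t - t * M) (xt t + t * M) ⊆ U := by
    intro s hs
    apply hball
    rw [Metric.mem_ball, Real.dist_eq, abs_lt]
    have hMt : 0 < t * M := by positivity
    rw [abs_lt] at h4
    constructor
    · nlinarith [hs.1, h4.1, h5]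
    · nlinarith [hs.2, h4.2, h5]
  have hPE : P E ≤ ENNReal.ofReal (D * (2 * (t * M))) := by
    calc P E ≤ P (X ⁻¹' Set.Ioc (xt t - t * M) (xt t + t * M)) := measure_mono hEsub
      _ = Measure.map X P (Set.Ioc (xt t - t * M) (xt t + t * M)) :=
          (Measure.map_apply hX measurableSet_Ioc).symm
      _ = ∫⁻ s in Set.Ioc (xt t - t * M) (xt t + t * M), ENNReal.ofReal (f s) := by
          rw [hdens, withDensity_apply _ measurableSet_Ioc]
      _ ≤ ∫⁻ _ in Set.Ioc (xt t - t * M) (xt t + t * M), ENNReal.ofReal D := by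
          apply setLIntegral_mono measurable_const
          intro s hs
          exact ENNReal.ofReal_le_ofReal (hD s (hIoc hs))
      _ = ENNReal.ofReal D * volume (Set.Ioc (xt t - t * M) (xt t + t * M)) :=
          setLIntegral_const _ _
      _ = ENNReal.ofReal (D * (2 * (t * M))) := by
          rw [Real.volume_Ioc, ← ENNReal.ofReal_mul hD0]
          congr 1; ring
  have hPEfin : P E < ⊤ := (measure_lt_top P E)
  have hPEreal : (P E).toReal ≤ D * (2 * (t * M)) :=
    ENNReal.toReal_le_of_le_ofReal (by positivity) hPE
  -- bound the integral
  have hint : ‖∫ ω in E, |g (Yt t ω) - g (Y ω)| ∂P‖ ≤ δ * (P E).toReal := by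
    apply norm_setIntegral_le_of_norm_le_const hPEfin
    · intro ω _
      rw [Real.norm_eq_abs, abs_abs]
      exact hptw ω
  rw [Real.norm_eq_abs]
  have hnn : (0:ℝ) ≤ ∫ ω in E, |g (Yt t ω) - g (Y ω)| ∂P :=
    integral_nonneg fun ω => abs_nonneg _
  rw [Real.norm_eq_abs, abs_of_nonneg hnn] at hint
  have hfinal : (1 / t) * ∫ ω in E, |g (Yt t ω) - g (Y ω)| ∂P ≤ 2 * M * D * δ := by
    calc (1 / t) * ∫ ω in E, |g (Yt t ω) - g (Y ω)| ∂P
        ≤ (1 / t) * (δ * (D * (2 * (t * M)))) := by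
          apply mul_le_mul_of_nonneg_left _ (by positivity)
          exact hint.trans (mul_le_mul_of_nonneg_left hPEreal hδ.le)
      _ = 2 * M * D * δ := by field_simp
  have hlt : 2 * M * D * δ < ε := by
    have hK : (0:ℝ) < 2 * M * D + 1 := by positivity
    rw [hδdef]
    calc 2 * M * D * (ε / (2 * M * D + 1)) = (2 * M * D * ε) / (2 * M * D + 1) := by
          ring
      _ < ε := by rw [div_lt_iff₀ hK]; nlinarith
  have habs0 : (0:ℝ) ≤ (1 / t) * ∫ ω in E, |g (Yt t ω) - g (Y ω)| ∂P := by positivity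
  rw [abs_of_nonneg habs0]
  exact lt_of_le_of_lt hfinal hlt
end
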